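/- Let L be a restricted Lie algebra over a field k of characteristic p > 0, A a restricted L-module, A^L = {a ∈ A : X·a = 0 for all X ∈ L} the invariants, and f : A → A^L a p-semilinear map (f(a+b) = f(a)+f(b), f(αa) = α^p f(a)). Then A ⊕ L is a restricted Lie algebra with the semidirect product bracket and p-map (a+X)^{[p]} = X^{p-1}·a + X^{[p]} + f(a). -/

import Mathlib

/-- The coefficient of `λ^(i-1)` in `ad_{λx+y}^{p-1}(x)`, written out as a sum over words:
for each subset `S` of the `p-1` bracketing slots of cardinality `i-1`, bracket `x`
successively with `x` (for slots in `S`) and `y` (for slots not in `S`). -/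
def jacCoeff {M : Type*} [AddCommMonoid M] (br : M → M → M) (p : ℕ) (x y : M) (i : ℕ) : M :=
  ∑ S ∈ Finset.univ.filter (fun S : Finset (Fin (p - 1)) => S.card = i - 1),
    (List.ofFn (fun j : Fin (p - 1) => decide (j ∈ S))).foldl
      (fun acc b => br acc (if b then x else y)) x

/-- `pm` is a `p`-map for the bracket `br`, i.e. the three axioms of a restricted
Lie algebra in the sense of Jacobson. -/
def IsPMapOn (k : Type*) {M : Type*} [CommRing k] [AddCommGroup M] [Module k M]
    (br : M → M → M) (p : ℕ) (pm : M → M) : Prop :=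
  (∀ (c : k) (x : M), pm (c • x) = c ^ p • pm x) ∧
  (∀ x y : M, br x (pm y) = (fun w => br w y)^[p] x) ∧
  (∀ x y : M, ∃ s : ℕ → M,
    (∀ i, 1 ≤ i → i ≤ p - 1 → i • s i = jacCoeff br p x y i) ∧
    pm (x + y) = pm x + pm y + ∑ i ∈ Finset.Icc 1 (p - 1), s i)

/-- `br` is a Lie bracket: `k`-bilinear, alternating and satisfying the Leibniz/Jacobi identity. -/
def IsLieBracketOn (k : Type*) {M : Type*} [CommRing k] [AddCommGroup M] [Module k M]
    (br : M → M → M) : Prop :=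
  (∀ x, IsLinearMap k (br x)) ∧ (∀ y, IsLinearMap k (fun x => br x y)) ∧
  (∀ x, br x x = 0) ∧
  (∀ x y z, br x (br y z) = br (br x y) z + br y (br x z))

namespace Stmt5Aux

open Polynomial Finset


variable {k : Type*} [Field k] {p : ℕ} [Fact p.Prime] [CharP k p]

lemma choose_cast (j : ℕ) (hj : j ≤ p - 1) : (((p-1).choose j : ℕ) : k) = (-1)^j := by
  have hp : p.Prime := Fact.out
  have hp2 := hp.two_le
  induction j with
  | zero => simp
  | succ n ih =>
    have hlt : n + 1 < p := by omega
    have h0 : (p.choose (n+1) : k) = 0 := by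
      obtain ⟨c, hc⟩ := hp.dvd_choose_self (Nat.succ_ne_zero n) hlt
      rw [hc]
      push_cast
      rw [CharP.cast_eq_zero k p]
      ring
    have hsplit : (p-1).choose n + (p-1).choose (n+1) = p.choose (n+1) := by
      rw [← Nat.choose_succ_succ]
      congr 1
      omega
    rw [← hsplit] at h0
    push_cast at h0
    rw [ih (by omega)] at h0
    rw [pow_succ]
    linear_combination h0

lemma neg_one_pow_p_sub_one : ((-1 : k))^(p-1) = 1 := by
  have hp : p.Prime := Fact.out
  have h : ((-1:k))^(p-1) * (-1) = -1 := by
    rw [← pow_succ, Nat.sub_add_cancel hp.one_lt.le, neg_one_pow_char k p]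
  have h2 : ((1:k)) * (-1) = -1 := by ring
  exact mul_right_cancel₀ (by simp) (h.trans h2.symm)

variable {R : Type*} [Ring R]

/-- number of `true`s -/
def cnt {n : ℕ} (g : Fin n → Bool) : ℕ := (Finset.univ.filter fun j => g j = true).card

/-- the commutator word -/
def wrd (r s : R) {n : ℕ} (g : Fin n → Bool) : R :=
  (List.ofFn g).foldl (fun acc b => acc * (if b then r else s) - (if b then r else s) * acc) r

lemma cnt_snoc {n : ℕ} (g : Fin n → Bool) (b : Bool) :
    cnt (Fin.snoc g b) = cnt g + if b then 1 else 0 := by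
  unfold cnt
  rw [Finset.card_filter, Finset.card_filter, Fin.sum_univ_castSucc]
  simp

lemma wrd_snoc (r s : R) {n : ℕ} (g : Fin n → Bool) (b : Bool) :
    wrd r s (Fin.snoc g b) =
      wrd r s g * (if b then r else s) - (if b then r else s) * wrd r s g := by
  unfold wrd
  rw [List.ofFn_succ']
  simp only [Fin.snoc_castSucc, Fin.snoc_last, List.concat_eq_append, List.foldl_concat]

lemma wordsum (r s : R) (n : ℕ) :
    (fun f : Polynomial R => f * (C r * X + C s) - (C r * X + C s) * f)^[n] (C r)
      = ∑ g : Fin n → Bool, monomial (cnt g) (wrd r s g) := by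
  induction n with
  | zero =>
    simp [wrd, cnt]
  | succ n ih =>
    rw [Function.iterate_succ_apply', ih]
    have key : ∀ t : R, ∀ c : ℕ,
        (monomial c t) * (C r * X + C s) - (C r * X + C s) * (monomial c t)
          = monomial c (t*s - s*t) + monomial (c+1) (t*r - r*t) := by
      intro t c
      rw [C_mul_X_eq_monomial, ← monomial_zero_left]
      simp only [mul_add, add_mul, monomial_mul_monomial, map_sub, Nat.zero_add,
        Nat.add_zero, Nat.add_comm 1 c]
      abel
    show (∑ g : Fin n → Bool, monomial (cnt g) (wrd r s g)) * (C r * X + C s)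
        - (C r * X + C s) * (∑ g : Fin n → Bool, monomial (cnt g) (wrd r s g)) = _
    rw [Finset.sum_mul, Finset.mul_sum, ← Finset.sum_sub_distrib]
    rw [Finset.sum_congr rfl fun g _ => key (wrd r s g) (cnt g)]
    rw [← (Fin.snocEquiv (fun _ => Bool)).sum_comp
        (fun h => monomial (cnt h) (wrd r s h)), Fintype.sum_prod_type, Fintype.sum_bool]
    rw [← Finset.sum_add_distrib]
    refine Finset.sum_congr rfl fun g _ => ?_
    simp only [Fin.snocEquiv, Equiv.coe_fn_mk]
    rw [wrd_snoc, wrd_snoc, cnt_snoc, cnt_snoc]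
    simp [add_comm]


lemma comm_iterate_p (k : Type*) [Field k] {p : ℕ} [Fact p.Prime] [CharP k p]
    {R : Type*} [Ring R] [Algebra k R] (hx : ∃ x : R, ∀ r : k, r • x = 0 → r = 0)
    (w t : R) :
    (fun f : R => f * w - w * f)^[p] t = t * w^p - w^p * t := by
  haveI : CharP (Module.End k R) p := Module.charP_end (by
    obtain ⟨x, hx⟩ := hx
    exact ⟨x, (Submodule.eq_bot_iff _).2 fun r hr => hx r ((Ideal.mem_torsionOf_iff x r).1 hr)⟩)
  have hfun : (fun f : R => f * w - w * f)
      = ⇑(LinearMap.mulRight k w - LinearMap.mulLeft k w) := by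
    ext f; simp
  rw [hfun, ← Module.End.pow_apply,
    sub_pow_char_of_commute _ ((LinearMap.commute_mulLeft_right w w).symm),
    LinearMap.pow_mulRight, LinearMap.pow_mulLeft]
  simp
section CharAlg

lemma comm_iterate_char (k : Type*) [Field k] [CharP k p] [Algebra k R] (w t : R) :
    (fun f : R => f * w - w * f)^[p-1] t = ∑ j ∈ Finset.range p, w^j * t * w^(p-1-j) := by
  have hp : p.Prime := Fact.out
  have hfun : (fun f : R => f * w - w * f)
      = ⇑(LinearMap.mulRight k w - LinearMap.mulLeft k w) := by
    ext f; simp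
  rw [hfun, ← Module.End.pow_apply]
  have hcomm : Commute (LinearMap.mulRight k w) (-(LinearMap.mulLeft k w)) :=
    ((LinearMap.commute_mulLeft_right (R := k) w w).symm).neg_right
  rw [sub_eq_add_neg, hcomm.add_pow, LinearMap.sum_apply]
  have hpp : p - 1 + 1 = p := Nat.succ_pred_eq_of_pos hp.pos
  rw [hpp]
  have hterm : ∀ m ∈ Finset.range p,
      (LinearMap.mulRight k w ^ m * (-LinearMap.mulLeft k w) ^ (p-1-m)
        * ((p-1).choose m : Module.End k R)) t
        = w^(p-1-m) * t * w^m := by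
    intro m hm
    rw [Finset.mem_range] at hm
    have hneg : (-LinearMap.mulLeft k w) = (-1 : k) • LinearMap.mulLeft k w := by
      exact (neg_one_smul k _).symm
    rw [hneg, _root_.smul_pow, LinearMap.pow_mulRight, LinearMap.pow_mulLeft]
    rw [Module.End.mul_apply, Module.End.mul_apply, Module.End.natCast_apply,
      ← Nat.cast_smul_eq_nsmul k, choose_cast m (by omega)]
    simp only [LinearMap.smul_apply, LinearMap.mulLeft_apply, LinearMap.mulRight_apply,
      map_smul, smul_smul]
    rw [← pow_add, (by omega : m + (p - 1 - m) = p - 1), neg_one_pow_p_sub_one (k := k), one_smul]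
  rw [Finset.sum_congr rfl hterm]
  have h2 : ∀ m ∈ Finset.range p,
      w^(p-1-m) * t * w^m = w^(p-1-m) * t * w^(p-1-(p-1-m)) := by
    intro m hm
    rw [Finset.mem_range] at hm
    congr 2
    omega
  rw [Finset.sum_congr rfl h2]
  exact Finset.sum_range_reflect (fun j => w^j * t * w^(p-1-j)) p

end CharAlg

lemma derivative_w_pow (r s : R) (n : ℕ) :
    derivative ((C r * X + C s)^(n+1))
      = ∑ j ∈ range (n+1), (C r * X + C s)^j * C r * (C r * X + C s)^(n-j) := by
  have hd : derivative (C r * X + C s) = C r := by simp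
  induction n with
  | zero => simp [hd]
  | succ n ih =>
    have h1 : ∀ j ∈ range (n+1),
        (C r * X + C s)^j * C r * (C r * X + C s)^(n-j) * (C r * X + C s)
          = (C r * X + C s)^j * C r * (C r * X + C s)^(n+1-j) := by
      intro j hj
      rw [Finset.mem_range] at hj
      rw [mul_assoc, ← pow_succ]
      congr 2
      omega
    rw [pow_succ, derivative_mul, ih, Finset.sum_mul, hd, Finset.sum_congr rfl h1]
    conv_rhs => rw [Finset.sum_range_succ]
    congr 1
    rw [Nat.sub_self, pow_zero, mul_one]

lemma coeff_w_pow_zero (r s : R) (n : ℕ) : ((C r * X + C s)^n).coeff 0 = s^n := by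
  induction n with
  | zero => simp
  | succ n ih => rw [pow_succ, Polynomial.mul_coeff_zero, ih]; simp [pow_succ]

lemma natDegree_w_pow_le (r s : R) (n : ℕ) : ((C r * X + C s)^n).natDegree ≤ n := by
  refine le_trans natDegree_pow_le ?_
  have h1 : (C r * X + C s).natDegree ≤ 1 := by
    refine le_trans (natDegree_add_le _ _) ?_
    simp only [max_le_iff]
    constructor
    · exact le_trans natDegree_mul_le (by simp [natDegree_X_le])
    · simp
  calc n * (C r * X + C s).natDegree ≤ n * 1 := Nat.mul_le_mul_left n h1
    _ = n := Nat.mul_one n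

lemma coeff_w_pow_top (r s : R) (n : ℕ) : ((C r * X + C s)^n).coeff n = r^n := by
  induction n with
  | zero => simp
  | succ n ih =>
    have hz : ((C r * X + C s)^n).coeff (n+1) = 0 :=
      coeff_eq_zero_of_natDegree_lt
        (lt_of_le_of_lt (natDegree_w_pow_le r s n) (Nat.lt_succ_self n))
    rw [pow_succ, mul_add, ← mul_assoc, coeff_add, coeff_mul_X, coeff_mul_C, coeff_mul_C, ih,
      hz, zero_mul, add_zero, pow_succ]

lemma sum_coeff_w_pow (r s : R) (m : ℕ) :
    (r+s)^m = ∑ i ∈ range (m+1), ((C r * X + C s)^m).coeff i := by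
  have hev : ∀ n : ℕ, eval₂ (RingHom.id R) 1 ((C r * X + C s)^n) = (r+s)^n := by
    intro n
    induction n with
    | zero => simp
    | succ n ih =>
      rw [pow_succ, Polynomial.eval₂_mul_noncomm _ _ (fun _ => Commute.one_right _), ih, pow_succ]
      congr 1
      rw [eval₂_add, Polynomial.eval₂_mul_noncomm _ _ (fun _ => Commute.one_right _)]
      simp
  rw [← hev m, Polynomial.eval₂_eq_sum,
    Polynomial.sum_over_range' _ (fun n => by simp) (m+1)
      (Nat.lt_succ_of_le (natDegree_w_pow_le r s m))]
  simp

lemma jacCoeff_comm_eq (r s : R) (i : ℕ) :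
    jacCoeff (fun f g : R => f*g - g*f) p r s i
      = ∑ g ∈ Finset.univ.filter (fun g : Fin (p-1) → Bool => cnt g = i - 1), wrd r s g := by
  unfold jacCoeff
  refine Finset.sum_bij' (i := fun S _ => fun j : Fin (p-1) => decide (j ∈ S))
    (j := fun g _ => Finset.univ.filter fun j => g j = true) ?_ ?_ ?_ ?_ ?_
  · intro S hS
    simp only [Finset.mem_filter, Finset.mem_univ, true_and] at hS ⊢
    rw [← hS]
    unfold cnt
    congr 1
    ext x
    simp
  · intro g hg
    simp only [Finset.mem_filter, Finset.mem_univ, true_and] at hg ⊢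
    exact hg
  · intro S hS
    ext x
    simp
  · intro g hg
    funext j
    simp
  · intro S hS
    rfl

lemma jacCoeff_eq_coeff_iterate (r s : R) (i : ℕ) :
    jacCoeff (fun f g : R => f*g - g*f) p r s i
      = ((fun f : Polynomial R => f * (C r * X + C s) - (C r * X + C s) * f)^[p-1]
          (C r)).coeff (i-1) := by
  rw [wordsum, finset_sum_coeff, jacCoeff_comm_eq, Finset.sum_filter]
  exact Finset.sum_congr rfl fun g _ => by rw [coeff_monomial]

lemma jacobson_smul (k : Type*) [Field k] [CharP k p] [Algebra k R] (r s : R) (i : ℕ)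
    (h1 : 1 ≤ i) (h2 : i ≤ p - 1) :
    jacCoeff (fun f g : R => f*g - g*f) p r s i = i • (((C r * X + C s)^p).coeff i) := by
  have hp : p.Prime := Fact.out
  have hpp : p - 1 + 1 = p := Nat.succ_pred_eq_of_pos hp.pos
  rw [jacCoeff_eq_coeff_iterate, comm_iterate_char k (C r * X + C s) (C r)]
  have hder := derivative_w_pow r s (p-1)
  rw [hpp] at hder
  rw [← hder, Polynomial.coeff_derivative]
  have hi : i - 1 + 1 = i := by omega
  rw [hi]
  have hcast : ((i-1 : ℕ) : R) + 1 = (i : R) := by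
    have h : i - 1 + 1 = i := by omega
    exact_mod_cast congrArg (Nat.cast : ℕ → R) h
  rw [hcast, ← nsmul_eq_mul']

lemma jacobson_sum (r s : R) :
    (r+s)^p = r^p + s^p + ∑ i ∈ Finset.Icc 1 (p-1), ((C r * X + C s)^p).coeff i := by
  have hp : p.Prime := Fact.out
  have hpp : p - 1 + 1 = p := Nat.succ_pred_eq_of_pos hp.pos
  rw [sum_coeff_w_pow r s p, Finset.sum_range_succ, coeff_w_pow_top,
    congrArg Finset.range hpp.symm, Finset.sum_range_succ', coeff_w_pow_zero]
  have hIcc : ∑ i ∈ Finset.Icc 1 (p-1), ((C r * X + C s)^p).coeff i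
      = ∑ j ∈ Finset.range (p-1), ((C r * X + C s)^p).coeff (j+1) := by
    refine Finset.sum_bij' (i := fun a _ => a - 1) (j := fun b _ => b + 1)
      (fun a ha => ?_) (fun b hb => ?_) (fun a ha => ?_) (fun b hb => ?_) (fun a ha => ?_)
    · simp only [Finset.mem_Icc] at ha
      simp only [Finset.mem_range]
      omega
    · simp only [Finset.mem_range] at hb
      simp only [Finset.mem_Icc]
      omega
    · simp only [Finset.mem_Icc] at ha
      omega
    · omega
    · simp only [Finset.mem_Icc] at ha
      congr 1
      omega
  rw [hIcc]
  abel

lemma jacCoeff_map {M N : Type*} [AddCommMonoid M] [AddCommMonoid N] (g : M →+ N)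
    (br : M → M → M) (br' : N → N → N) (hbr : ∀ x y, g (br x y) = br' (g x) (g y))
    (p : ℕ) (x y : M) (i : ℕ) :
    g (jacCoeff br p x y i) = jacCoeff br' p (g x) (g y) i := by
  unfold jacCoeff
  rw [map_sum]
  refine Finset.sum_congr rfl fun S _ => ?_
  exact (List.foldl_hom g (fun a b => by cases b <;> simp [hbr])).symm

section Rep

variable {k L A : Type*} [Field k] [LieRing L] [LieAlgebra k L]
    [AddCommGroup A] [Module k A] [LieRingModule L A] [LieModule k L A]

variable (k) in
/-- the representation of the semidirect product on `k × A` -/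
def rho (u : A × L) : Module.End k (k × A) where
  toFun v := (0, v.1 • u.1 + ⁅u.2, v.2⁆)
  map_add' v w := by
    ext
    · simp
    · simp [add_smul]
      abel
  map_smul' c v := by
    ext
    · simp
    · simp [mul_smul, smul_add]

@[simp] lemma rho_apply (u : A × L) (v : k × A) :
    rho k u v = (0, v.1 • u.1 + ⁅u.2, v.2⁆) := rfl

lemma rho_add (u v : A × L) : rho k (u + v) = rho k u + rho k v := by
  apply LinearMap.ext
  rintro ⟨t, m⟩
  apply Prod.ext
  · simp
  · simp [smul_add]
    abel

variable (k L A) in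
/-- `rho` as an additive monoid hom -/
def rhoHom : (A × L) →+ Module.End k (k × A) := AddMonoidHom.mk' (rho k) rho_add

lemma rho_bracket (u v : A × L) :
    rho k ((⁅u.2, v.1⁆ - ⁅v.2, u.1⁆, ⁅u.2, v.2⁆) : A × L)
      = rho k u * rho k v - rho k v * rho k u := by
  apply LinearMap.ext
  rintro ⟨t, m⟩
  apply Prod.ext
  · simp
  · simp only [rho_apply, LinearMap.sub_apply, Module.End.mul_apply]
    simp [lie_lie, smul_sub, lie_add, lie_smul]
    abel

lemma rho_pow (u : A × L) (n : ℕ) (t : k) (m : A) :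
    ((rho k u)^(n+1)) (t, m) = (0, t • ((fun w => ⁅u.2, w⁆)^[n] u.1)
      + (fun w => ⁅u.2, w⁆)^[n+1] m) := by
  induction n with
  | zero => simp
  | succ n ih =>
    rw [pow_succ', Module.End.mul_apply, ih]
    apply Prod.ext
    · simp
    · show (0:k) • u.1 + ⁅u.2, t • _ + _⁆ = _
      rw [zero_smul, zero_add, lie_add, lie_smul,
        Function.iterate_succ_apply' (fun w => ⁅u.2, w⁆) (n+1) m,
        Function.iterate_succ_apply' (fun w => ⁅u.2, w⁆) n u.1]

lemma rho_pow_eval (u : A × L) {p : ℕ} (hp : 0 < p) :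
    ((rho k u)^p) ((1 : k), (0 : A)) = (0, (fun w => ⁅u.2, w⁆)^[p-1] u.1) := by
  obtain ⟨n, rfl⟩ : ∃ n, p = n + 1 := ⟨p - 1, by omega⟩
  rw [rho_pow]
  simp [Function.iterate_fixed (lie_zero u.2)]

lemma iter_smul (c : k) (X : L) (a : A) (n : ℕ) :
    (fun w => ⁅c • X, w⁆)^[n] (c • a) = c^(n+1) • (fun w => ⁅X, w⁆)^[n] a := by
  induction n with
  | zero => simp
  | succ n ih =>
    rw [Function.iterate_succ_apply', ih, Function.iterate_succ_apply',
      smul_lie, lie_smul, smul_smul, ← pow_succ']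

end Rep

end Stmt5Aux

open Stmt5Aux in
/-- Let `L` be a restricted Lie algebra over `k` (char `p > 0`), `A` a restricted
`L`-module, and `f : A → A^L` a `p`-semilinear map into the invariants.  Then `A ⊕ L`
with the semidirect bracket and `p`-map `(a+X)^{[p]} = X^{p-1}·a + X^{[p]} + f(a)`
is a restricted Lie algebra. -/
theorem stmt_5 (k L A : Type*) [Field k] [LieRing L] [LieAlgebra k L]
    [AddCommGroup A] [Module k A] [LieRingModule L A] [LieModule k L A]
    (p : ℕ) [Fact p.Prime] [CharP k p]
    (pm : L → L) (hpm : IsPMapOn k (fun x y : L => ⁅x, y⁆) p pm)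
    (hres : ∀ (X : L) (m : A), ⁅pm X, m⁆ = (fun w => ⁅X, w⁆)^[p] m)
    (f : A → A) (hfadd : ∀ a b : A, f (a + b) = f a + f b)
    (hfsemi : ∀ (c : k) (a : A), f (c • a) = c ^ p • f a)
    (hfinv : ∀ (X : L) (a : A), ⁅X, f a⁆ = 0) :
    IsLieBracketOn k (fun u v : A × L => (⁅u.2, v.1⁆ - ⁅v.2, u.1⁆, ⁅u.2, v.2⁆)) ∧
    IsPMapOn k (fun u v : A × L => (⁅u.2, v.1⁆ - ⁅v.2, u.1⁆, ⁅u.2, v.2⁆)) p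
      (fun u : A × L => ((fun w => ⁅u.2, w⁆)^[p - 1] u.1 + f u.1, pm u.2)) := by
  have hp : p.Prime := Fact.out
  have hpp : p - 1 + 1 = p := Nat.succ_pred_eq_of_pos hp.pos
  constructor
  · -- the bracket axioms
    refine ⟨fun x => ⟨fun u v => ?_, fun c u => ?_⟩,
      fun y => ⟨fun u v => ?_, fun c u => ?_⟩, fun x => ?_, fun x y z => ?_⟩
    · apply Prod.ext
      · simp only [Prod.fst_add, Prod.snd_add, lie_add, add_lie]
        abel
      · simp [lie_add]
    · apply Prod.ext
      · simp [lie_smul, smul_lie, smul_sub]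
      · simp [lie_smul]
    · apply Prod.ext
      · simp only [Prod.fst_add, Prod.snd_add, lie_add, add_lie]
        abel
      · simp [add_lie]
    · apply Prod.ext
      · simp [lie_smul, smul_lie, smul_sub]
      · simp [smul_lie]
    · apply Prod.ext <;> simp
    · apply Prod.ext
      · simp only [lie_sub, sub_lie, lie_lie, Prod.fst_add, Prod.snd_add]
        abel
      · exact leibniz_lie x.2 y.2 z.2
  · -- the p-map axioms
    obtain ⟨hpm1, hpm2, hpm3⟩ := hpm
    have heps : ∀ m : A × L, ((rho k m) ((1:k), (0:A))).2 = m.1 := by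
      intro m; simp
    have hone : ∀ r : k, r • (1 : Module.End k (k × A)) = 0 → r = 0 := by
      intro r h
      have := congrArg (fun T : Module.End k (k × A) => (T ((1:k),(0:A))).1) h
      simpa using this
    refine ⟨fun c u => ?_, fun u v => ?_, fun u v => ?_⟩
    · -- axiom 1 : pm (c • u) = c^p • pm u
      apply Prod.ext
      · show (fun w => ⁅(c • u).2, w⁆)^[p-1] ((c • u).1) + f ((c • u).1) = _
        rw [Prod.smul_fst, Prod.smul_snd, iter_smul, hpp, hfsemi]
        simp [smul_add]
      · exact hpm1 c u.2
    · -- axiom 2 : br u (pm v) = (ad_v)^p u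
      have hsnd : ∀ n (w : A × L),
          (((fun w : A × L => (⁅w.2, v.1⁆ - ⁅v.2, w.1⁆, ⁅w.2, v.2⁆))^[n] w)).2
            = (fun Z => ⁅Z, v.2⁆)^[n] w.2 := by
        intro n
        induction n with
        | zero => intro w; rfl
        | succ n ih =>
          intro w
          rw [Function.iterate_succ_apply', Function.iterate_succ_apply', ← ih w]
      have hGF : ∀ n (w : A × L),
          rho k ((fun w : A × L => (⁅w.2, v.1⁆ - ⁅v.2, w.1⁆, ⁅w.2, v.2⁆))^[n] w)
            = (fun T : Module.End k (k × A) => T * rho k v - rho k v * T)^[n] (rho k w) := by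
        intro n
        induction n with
        | zero => intro w; rfl
        | succ n ih =>
          intro w
          rw [Function.iterate_succ_apply', Function.iterate_succ_apply', ← ih w,
            rho_bracket]
      apply Prod.ext
      · -- first components
        have hL : (⁅u.2, (fun w => ⁅v.2, w⁆)^[p - 1] v.1 + f v.1⁆ - ⁅pm v.2, u.1⁆ : A)
            = ⁅u.2, (fun w => ⁅v.2, w⁆)^[p - 1] v.1⁆ - (fun w => ⁅v.2, w⁆)^[p] u.1 := by
          rw [lie_add, hfinv, add_zero, hres]
        have hR : (((fun w : A × L => (⁅w.2, v.1⁆ - ⁅v.2, w.1⁆, ⁅w.2, v.2⁆))^[p] u)).1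
            = ⁅u.2, (fun w => ⁅v.2, w⁆)^[p - 1] v.1⁆ - (fun w => ⁅v.2, w⁆)^[p] u.1 := by
          rw [← heps _, hGF p u, comm_iterate_p k ⟨1, hone⟩ (rho k v) (rho k u)]
          have h1 : ((rho k v)^p) ((1:k), (0:A)) = (0, (fun w => ⁅v.2, w⁆)^[p-1] v.1) :=
            rho_pow_eval v hp.pos
          have h2 : ((rho k v)^p) ((0:k), u.1) = (0, (fun w => ⁅v.2, w⁆)^[p] u.1) := by
            conv_lhs => rw [← hpp]
            rw [rho_pow, zero_smul, zero_add, hpp]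
          have h3 : rho k u ((0:k), (fun w => ⁅v.2, w⁆)^[p-1] v.1)
              = ((0:k), (⁅u.2, (fun w => ⁅v.2, w⁆)^[p-1] v.1⁆ : A)) := by
            simp
          have h4 : rho k u ((1:k), (0:A)) = ((0:k), u.1) := by simp
          rw [LinearMap.sub_apply, Module.End.mul_apply, Module.End.mul_apply,
            h1, h4, h2, h3, Prod.snd_sub]
        exact hL.trans hR.symm
      · -- second components
        rw [hsnd p u]
        exact hpm2 u.2 v.2
    · -- axiom 3 : Jacobson's formula for the sum
      have hne : ∀ i : ℕ, 1 ≤ i → i ≤ p - 1 → ((i : k) ≠ 0) := by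
        intro i h1 h2 h0
        rw [CharP.cast_eq_zero_iff k p i] at h0
        have := Nat.le_of_dvd (by omega) h0
        omega
      refine ⟨fun i => ((i:k)⁻¹) •
        jacCoeff (fun u v : A × L => (⁅u.2, v.1⁆ - ⁅v.2, u.1⁆, ⁅u.2, v.2⁆)) p u v i,
        fun i h1 h2 => ?_, ?_⟩
      · rw [← Nat.cast_smul_eq_nsmul k, smul_smul, mul_inv_cancel₀ (hne i h1 h2), one_smul]
      · -- the sum identity
        have hci : ∀ i, 1 ≤ i → i ≤ p - 1 →
            (((i:k)⁻¹) • jacCoeff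
              (fun u v : A × L => (⁅u.2, v.1⁆ - ⁅v.2, u.1⁆, ⁅u.2, v.2⁆)) p u v i).1
              = ((((Polynomial.C (rho k u) * Polynomial.X
                  + Polynomial.C (rho k v))^p).coeff i) ((1:k), (0:A))).2 := by
          intro i h1 h2
          rw [Prod.smul_fst]
          have hmap := jacCoeff_map (rhoHom k L A)
            (fun u v : A × L => (⁅u.2, v.1⁆ - ⁅v.2, u.1⁆, ⁅u.2, v.2⁆))
            (fun T U : Module.End k (k × A) => T * U - U * T)
            (fun x y => rho_bracket x y) p u v i
          have hjac := jacobson_smul (p := p) (R := Module.End k (k × A)) k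
            (rho k u) (rho k v) i h1 h2
          have hval : (jacCoeff (fun u v : A × L =>
              (⁅u.2, v.1⁆ - ⁅v.2, u.1⁆, ⁅u.2, v.2⁆)) p u v i).1
              = ((i • (((Polynomial.C (rho k u) * Polynomial.X
                  + Polynomial.C (rho k v))^p).coeff i)) ((1:k), (0:A))).2 := by
            rw [← heps _]
            show ((rhoHom k L A) _ ((1:k),(0:A))).2 = _
            rw [hmap]
            show ((jacCoeff (fun T U : Module.End k (k × A) => T * U - U * T) p
              (rho k u) (rho k v) i) ((1:k),(0:A))).2 = _
            rw [hjac]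
          rw [hval, LinearMap.smul_apply, Prod.smul_snd, ← Nat.cast_smul_eq_nsmul k,
            smul_smul, inv_mul_cancel₀ (hne i h1 h2), one_smul]
        have hsum : (∑ i ∈ Finset.Icc 1 (p-1), (((i:k)⁻¹) • jacCoeff
              (fun u v : A × L => (⁅u.2, v.1⁆ - ⁅v.2, u.1⁆, ⁅u.2, v.2⁆)) p u v i)).1
            = (fun w => ⁅(u+v).2, w⁆)^[p-1] ((u+v).1)
              - (fun w => ⁅u.2, w⁆)^[p-1] u.1 - (fun w => ⁅v.2, w⁆)^[p-1] v.1 := by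
          rw [Prod.fst_sum]
          have hcongr : ∑ i ∈ Finset.Icc 1 (p-1), (((i:k)⁻¹) • jacCoeff
                (fun u v : A × L => (⁅u.2, v.1⁆ - ⁅v.2, u.1⁆, ⁅u.2, v.2⁆)) p u v i).1
              = ∑ i ∈ Finset.Icc 1 (p-1), ((((Polynomial.C (rho k u) * Polynomial.X
                  + Polynomial.C (rho k v))^p).coeff i) ((1:k), (0:A))).2 :=
            Finset.sum_congr rfl (fun i hi => by
              rw [Finset.mem_Icc] at hi
              exact hci i hi.1 hi.2)
          rw [hcongr, ← Prod.snd_sum, ← LinearMap.sum_apply]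
          have hjs := jacobson_sum (p := p) (R := Module.End k (k × A)) (rho k u) (rho k v)
          have hSS : ∑ i ∈ Finset.Icc 1 (p-1),
              (((Polynomial.C (rho k u) * Polynomial.X
                + Polynomial.C (rho k v))^p).coeff i)
              = (rho k u + rho k v)^p - (rho k u)^p - (rho k v)^p := by
            rw [hjs]
            abel
          rw [hSS, ← rho_add]
          have e1 : ((rho k (u+v))^p) ((1:k),(0:A))
              = (0, (fun w => ⁅(u+v).2, w⁆)^[p-1] ((u+v).1)) := rho_pow_eval (u+v) hp.pos
          have e2 : ((rho k u)^p) ((1:k),(0:A))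
              = (0, (fun w => ⁅u.2, w⁆)^[p-1] u.1) := rho_pow_eval u hp.pos
          have e3 : ((rho k v)^p) ((1:k),(0:A))
              = (0, (fun w => ⁅v.2, w⁆)^[p-1] v.1) := rho_pow_eval v hp.pos
          rw [LinearMap.sub_apply, LinearMap.sub_apply, e1, e2, e3,
            Prod.snd_sub, Prod.snd_sub]
        apply Prod.ext
        · show (fun w => ⁅(u+v).2, w⁆)^[p-1] ((u+v).1) + f ((u+v).1) = _
          rw [Prod.fst_add, Prod.fst_add, hsum]
          show _ = (fun w => ⁅u.2, w⁆)^[p-1] u.1 + f u.1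
            + ((fun w => ⁅v.2, w⁆)^[p-1] v.1 + f v.1) + _
          rw [Prod.fst_add, hfadd]
          abel
        · show pm ((u+v).2) = _
          obtain ⟨sL, hsL1, hsL2⟩ := hpm3 u.2 v.2
          rw [Prod.snd_add, Prod.snd_add, Prod.snd_add, Prod.snd_sum]
          show _ = pm u.2 + pm v.2 + _
          rw [hsL2]
          congr 1
          refine Finset.sum_congr rfl fun i hi => ?_
          rw [Finset.mem_Icc] at hi
          rw [Prod.smul_snd]
          have hJ2 : (jacCoeff (fun u v : A × L =>
              (⁅u.2, v.1⁆ - ⁅v.2, u.1⁆, ⁅u.2, v.2⁆)) p u v i).2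
              = jacCoeff (fun x y : L => ⁅x, y⁆) p u.2 v.2 i :=
            jacCoeff_map (AddMonoidHom.snd A L) _ _ (fun x y => rfl) p u v i
          rw [← hsL1 i hi.1 hi.2] at hJ2
          rw [hJ2, ← Nat.cast_smul_eq_nsmul k, smul_smul,
            inv_mul_cancel₀ (hne i hi.1 hi.2), one_smul]
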